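/- Let V : ℝⁿ → ℝ≥0 satisfy α₁(‖x‖) ≤ V(x) ≤ α₂(‖x‖) with α₁, α₂ ∈ 𝒦∞, and suppose along solutions V(x(t+d)) ≤ ρ(V(x(t))) for a continuous positive definite ρ with ρ(s) < s for s > 0. Then there exists γ ∈ 𝒦 such that V(x(t+d)) − V(x(t)) ≤ −γ(‖x(t)‖) along the same solutions. -/

import Mathlib

noncomputable section
open Set Filter

def IsKFun (α : ℝ → ℝ) : Prop :=
  ContinuousOn α (Set.Ici 0) ∧ StrictMonoOn α (Set.Ici 0) ∧ α 0 = 0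

def IsKInfFun (α : ℝ → ℝ) : Prop :=
  IsKFun α ∧ Filter.Tendsto α Filter.atTop Filter.atTop

/-- if `V(x(t+d)) ≤ ρ(V(x(t)))` along solutions (remaining in a compact set)
for a continuous positive definite `ρ < id`, then there exists `γ ∈ 𝒦` with
`V(x(t+d)) − V(x(t)) ≤ −γ(‖x(t)‖)`. -/
theorem stmt1 {n : ℕ} (f : EuclideanSpace ℝ (Fin n) → EuclideanSpace ℝ (Fin n))
    (V : EuclideanSpace ℝ (Fin n) → ℝ) (α₁ α₂ ρ : ℝ → ℝ) (d : ℝ) (hd : 0 < d)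
    (hα₁ : IsKInfFun α₁) (hα₂ : IsKInfFun α₂)
    (hρc : ContinuousOn ρ (Set.Ici 0)) (hρ0 : ρ 0 = 0)
    (hρpos : ∀ s > (0:ℝ), 0 < ρ s) (hρlt : ∀ s > (0:ℝ), ρ s < s)
    (hbound : ∀ y, α₁ ‖y‖ ≤ V y ∧ V y ≤ α₂ ‖y‖)
    (S : Set (EuclideanSpace ℝ (Fin n))) (hS : IsCompact S)
    (x : ℝ → EuclideanSpace ℝ (Fin n)) (hx : ∀ t, HasDerivAt x (f (x t)) t)
    (hxS : ∀ t ≥ (0:ℝ), x t ∈ S)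
    (hdec : ∀ t ≥ (0:ℝ), V (x (t + d)) ≤ ρ (V (x t))) :
    ∃ γ : ℝ → ℝ, IsKFun γ ∧ ∀ t ≥ (0:ℝ), V (x (t + d)) - V (x t) ≤ -γ ‖x t‖ := by
  obtain ⟨⟨hα₁c, hα₁m, hα₁0⟩, _⟩ := hα₁
  obtain ⟨⟨hα₂c, hα₂m, hα₂0⟩, _⟩ := hα₂
  -- a radius bound for the compact set
  obtain ⟨C, hC⟩ := hS.isBounded.exists_norm_le
  set R : ℝ := max C 1 with hRdef
  have hR0 : (0:ℝ) < R := lt_of_lt_of_le one_pos (le_max_right _ _)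
  have hnorm : ∀ t ≥ (0:ℝ), ‖x t‖ ≤ R :=
    fun t ht => le_trans (hC _ (hxS t ht)) (le_max_left _ _)
  set M : ℝ := α₂ R with hMdef
  have hM0 : (0:ℝ) < M := by
    rw [hMdef, ← hα₂0]
    exact hα₂m (self_mem_Ici) (le_of_lt hR0) hR0
  -- the positive definite gap function
  set h : ℝ → ℝ := fun s => s - ρ s with hhdef
  have hhc : ContinuousOn h (Ici 0) := continuousOn_id.sub hρc
  have hhpos : ∀ s, 0 < s → 0 < h s := fun s hs => sub_pos.mpr (hρlt s hs)
  have hhnonneg : ∀ s, 0 ≤ s → 0 ≤ h s := by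
    intro s hs
    rcases eq_or_lt_of_le hs with h0 | h0
    · simp [hhdef, ← h0, hρ0]
    · exact le_of_lt (hhpos s h0)
  -- clamp to [0, M]
  set cl : ℝ → ℝ := fun a => min (max a 0) M with hcldef
  have hcl_mem : ∀ a, cl a ∈ Icc (0:ℝ) M := by
    intro a
    exact ⟨le_min (le_max_right _ _) (le_of_lt hM0), min_le_right _ _⟩
  have hcl_mono : Monotone cl := fun a b hab =>
    min_le_min (max_le_max hab le_rfl) le_rfl
  have hcl_eq : ∀ a, 0 ≤ a → a ≤ M → cl a = a := by
    intro a h0 hM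
    rw [hcldef]; simp [max_eq_left h0, min_eq_left hM]
  -- φ a = inf of h on [cl a, M]
  set φ : ℝ → ℝ := fun a => sInf (h '' Icc (cl a) M) with hφdef
  have hIccne : ∀ a, (Icc (cl a) M).Nonempty := fun a => nonempty_Icc.mpr (hcl_mem a).2
  have hbdd : ∀ a, BddBelow (h '' Icc (cl a) M) := by
    intro a
    refine ⟨0, fun y hy => ?_⟩
    obtain ⟨s, hs, rfl⟩ := hy
    exact hhnonneg s (le_trans (hcl_mem a).1 hs.1)
  have hφ_nonneg : ∀ a, 0 ≤ φ a := by
    intro a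
    exact le_csInf ((hIccne a).image h) fun y hy => by
      obtain ⟨s, hs, rfl⟩ := hy
      exact hhnonneg s (le_trans (hcl_mem a).1 hs.1)
  have hφ_mono : Monotone φ := by
    intro a b hab
    refine csInf_le_csInf (hbdd a) ((hIccne b).image h) (image_mono (f := h) ?_)
    exact Icc_subset_Icc (hcl_mono hab) le_rfl
  have hφ_le : ∀ a s, cl a ≤ s → s ≤ M → φ a ≤ h s := by
    intro a s h1 h2
    exact csInf_le (hbdd a) ⟨s, ⟨h1, h2⟩, rfl⟩
  have hφ_pos : ∀ a, 0 < a → 0 < φ a := by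
    intro a ha
    have hclpos : 0 < cl a := lt_min (lt_max_of_lt_left ha) hM0
    have hcpt : IsCompact (Icc (cl a) M) := isCompact_Icc
    have hsub : Icc (cl a) M ⊆ Ici (0:ℝ) :=
      fun s hs => le_trans (hcl_mem a).1 hs.1
    obtain ⟨s₀, hs₀, hmin⟩ := hcpt.exists_isMinOn (hIccne a) (hhc.mono hsub)
    have : 0 < h s₀ := hhpos s₀ (lt_of_lt_of_le hclpos hs₀.1)
    refine lt_of_lt_of_le this (le_csInf ((hIccne a).image h) ?_)
    intro y hy
    obtain ⟨s, hs, rfl⟩ := hy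
    exact hmin hs
  -- the monotone integrand
  set cl' : ℝ → ℝ := fun u => min (max u 0) R with hcl'def
  have hcl'_mem : ∀ u, cl' u ∈ Icc (0:ℝ) R :=
    fun u => ⟨le_min (le_max_right _ _) (le_of_lt hR0), min_le_right _ _⟩
  have hcl'_mono : Monotone cl' := fun a b hab =>
    min_le_min (max_le_max hab le_rfl) le_rfl
  have hcl'_eq : ∀ u, 0 ≤ u → u ≤ R → cl' u = u := by
    intro u h0 hR
    rw [hcl'def]; simp [max_eq_left h0, min_eq_left hR]
  set m : ℝ → ℝ := fun u => φ (α₁ (cl' u)) with hmdef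
  have hm_mono : Monotone m := by
    intro a b hab
    exact hφ_mono (hα₁m.monotoneOn (hcl'_mem a).1 (hcl'_mem b).1 (hcl'_mono hab))
  have hm_int : ∀ a b : ℝ, IntervalIntegrable m MeasureTheory.volume a b :=
    fun a b => hm_mono.intervalIntegrable
  have hm_nonneg : ∀ u, 0 ≤ m u := fun u => hφ_nonneg _
  have hm_pos : ∀ u, 0 < u → 0 < m u := by
    intro u hu
    have : 0 < cl' u := lt_min (lt_max_of_lt_left hu) hR0
    have : 0 < α₁ (cl' u) := by
      rw [← hα₁0]
      exact hα₁m self_mem_Ici (hcl'_mem u).1 this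
    exact hφ_pos _ this
  -- the K-function
  set F : ℝ → ℝ := fun a => ∫ u in (0:ℝ)..a, m u with hFdef
  have hFcont : Continuous F := intervalIntegral.continuous_primitive hm_int 0
  have hFmono : Monotone F := by
    intro a b hab
    rw [hFdef]
    simp only
    rw [← intervalIntegral.integral_add_adjacent_intervals (hm_int 0 a) (hm_int a b)]
    have : 0 ≤ ∫ u in a..b, m u :=
      intervalIntegral.integral_nonneg hab fun u _ => hm_nonneg u
    linarith
  have hFstrict : ∀ a b : ℝ, 0 ≤ a → a < b → F a < F b := by
    intro a b ha hab
    set c := (a + b) / 2 with hcdef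
    have hac : a < c := by rw [hcdef]; linarith
    have hcb : c < b := by rw [hcdef]; linarith
    have h1 : F a ≤ F c := hFmono (le_of_lt hac)
    have h2 : F c < F b := by
      have key : (b - c) * m c ≤ ∫ u in c..b, m u := by
        have := intervalIntegral.integral_mono_on (le_of_lt hcb)
          (intervalIntegrable_const (c := m c)) (hm_int c b)
          (fun u hu => hm_mono hu.1)
        simpa using this
      have hmc : 0 < m c := hm_pos c (lt_of_le_of_lt ha hac)
      have : 0 < ∫ u in c..b, m u :=
        lt_of_lt_of_le (mul_pos (by linarith) hmc) key
      have hsplit : F b = F c + ∫ u in c..b, m u := by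
        rw [hFdef]
        simp only
        rw [← intervalIntegral.integral_add_adjacent_intervals (hm_int 0 c) (hm_int c b)]
      rw [hsplit]; linarith
    exact lt_of_le_of_lt h1 h2
  set γ : ℝ → ℝ := fun r => (1 / R) * F (min r R) + max (r - R) 0 with hγdef
  refine ⟨γ, ⟨?_, ?_, ?_⟩, ?_⟩
  · -- continuity
    apply Continuous.continuousOn
    exact ((continuous_const.mul (hFcont.comp (continuous_id.min continuous_const))).add
      ((continuous_id.sub continuous_const).max continuous_const))
  · -- strict monotone
    intro a ha b hb hab
    rw [hγdef]
    simp only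
    rcases lt_or_ge a R with haR | haR
    · have h1 : F (min a R) < F (min b R) := by
        apply hFstrict _ _ (le_min ha (le_of_lt hR0))
        rcases le_or_gt b R with hbR | hbR
        · rw [min_eq_left (le_of_lt haR), min_eq_left hbR]; exact hab
        · rw [min_eq_left (le_of_lt haR), min_eq_right (le_of_lt hbR)]; exact haR
      have h2 : max (a - R) 0 ≤ max (b - R) 0 :=
        max_le_max (by linarith) le_rfl
      have := mul_lt_mul_of_pos_left h1 (by positivity : (0:ℝ) < 1 / R)
      linarith
    · have h1 : F (min a R) ≤ F (min b R) := hFmono (min_le_min (le_of_lt hab) le_rfl)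
      have h2 : max (a - R) 0 < max (b - R) 0 := by
        rw [max_eq_left (by linarith : (0:ℝ) ≤ a - R), max_eq_left (by linarith : (0:ℝ) ≤ b - R)]
        linarith
      have := mul_le_mul_of_nonneg_left h1 (by positivity : (0:ℝ) ≤ 1 / R)
      linarith
  · -- γ 0 = 0
    rw [hγdef]
    simp only
    rw [min_eq_left (le_of_lt hR0), max_eq_right (by linarith : (0:ℝ) - R ≤ 0), hFdef]
    simp
  · -- the main bound
    intro t ht
    set r := ‖x t‖ with hrdef
    have hr0 : 0 ≤ r := norm_nonneg _
    have hrR : r ≤ R := hnorm t ht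
    set v := V (x t) with hvdef
    have hv1 : α₁ r ≤ v := (hbound (x t)).1
    have hv2 : v ≤ M := le_trans (hbound (x t)).2 (hα₂m.monotoneOn hr0 (le_of_lt hR0) hrR)
    -- γ r ≤ h v
    have hα₁rM : α₁ r ≤ M := le_trans hv1 hv2
    have hα₁r0 : 0 ≤ α₁ r := by rw [← hα₁0]; exact hα₁m.monotoneOn self_mem_Ici hr0 hr0
    have hγ_le : γ r ≤ h v := by
      rw [hγdef]
      simp only
      rw [max_eq_right (by linarith : r - R ≤ 0), min_eq_left hrR, add_zero]
      have step1 : F r ≤ r * m r := by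
        have := intervalIntegral.integral_mono_on hr0 (hm_int 0 r)
          (intervalIntegrable_const (c := m r))
          (fun u hu => hm_mono hu.2)
        simpa [hFdef] using this
      have step2 : m r ≤ h v := by
        rw [hmdef]
        simp only
        rw [hcl'_eq r hr0 hrR]
        refine hφ_le (α₁ r) v ?_ hv2
        rw [hcl_eq (α₁ r) hα₁r0 hα₁rM]
        exact hv1
      have step3 : (1 / R) * F r ≤ (1 / R) * (r * m r) :=
        mul_le_mul_of_nonneg_left step1 (by positivity)
      have step4 : (1 / R) * (r * m r) ≤ m r := by
        have h1 : (1 / R) * r ≤ 1 := by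
          rw [div_mul_eq_mul_div, one_mul, div_le_one hR0]; exact hrR
        calc (1 / R) * (r * m r) = ((1 / R) * r) * m r := by ring
          _ ≤ 1 * m r := mul_le_mul_of_nonneg_right h1 (hm_nonneg r)
          _ = m r := one_mul _
      exact le_trans step3 (le_trans step4 step2)
    have := hdec t ht
    have hhv : h v = v - ρ v := rfl
    have : V (x (t + d)) - v ≤ ρ v - v := by linarith
    have : V (x (t + d)) - v ≤ -h v := by rw [hhv]; linarith
    linarith
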